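/- Let α ≥ β ≥ -1/2 with α > β, and let s ≥ 2(α - β) with s > 0. Then for all t in (0,1), (1-t)^(α-β)/(arccos t)^s - (1+t)^(α-β)/(arccos(-t))^s > 0. -/

import Mathlib

set_option maxHeartbeats 1000000

open Real Set

lemma aux_sin_cos (u : ℝ) (hu0 : 0 < u) (hu1 : u < π / 2) :
    u + Real.cos u < Real.sin u + 1 := by
  have key : StrictMonoOn (fun u => Real.sin u + 1 - Real.cos u - u) (Set.Icc 0 (π / 2)) := by
    apply strictMonoOn_of_deriv_pos (convex_Icc _ _)
    · fun_prop
    · intro x hx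
      rw [interior_Icc] at hx
      obtain ⟨hx1, hx2⟩ := hx
      have hd : HasDerivAt (fun u => Real.sin u + 1 - Real.cos u - u)
          (Real.cos x - -Real.sin x - 1) x := by
        exact (((Real.hasDerivAt_sin x).add_const 1).sub (Real.hasDerivAt_cos x)).sub
          (hasDerivAt_id x)
      rw [hd.deriv]
      have hc : 0 < Real.cos x := Real.cos_pos_of_mem_Ioo ⟨by linarith [Real.pi_pos], hx2⟩
      have hs : 0 < Real.sin x := Real.sin_pos_of_pos_of_lt_pi hx1 (by linarith [Real.pi_pos])
      have hc1 : Real.cos x ≤ 1 := Real.cos_le_one x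
      have hpyth := Real.sin_sq_add_cos_sq x
      have hs1 : Real.sin x < 1 := by nlinarith
      nlinarith [mul_pos hs (by linarith : (0:ℝ) < 1 - Real.sin x),
        mul_nonneg hc.le (by linarith : (0:ℝ) ≤ 1 - Real.cos x)]
  have h0 : (0 : ℝ) ∈ Set.Icc (0:ℝ) (π/2) := ⟨le_refl _, by positivity⟩
  have hu : u ∈ Set.Icc (0:ℝ) (π/2) := ⟨hu0.le, hu1.le⟩
  have := key h0 hu hu0
  simp at this
  linarith

lemma aux_key (x : ℝ) (hx0 : 0 < x) (hx1 : x < π / 4) :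
    2 * x * Real.cos x < (π - 2 * x) * Real.sin x := by
  set F : ℝ → ℝ := fun x => 2 * x * Real.cos x / Real.sin x + 2 * x with hF
  have hmono : StrictMonoOn F (Set.Ioc 0 (π / 4)) := by
    apply strictMonoOn_of_deriv_pos (convex_Ioc _ _)
    · apply ContinuousOn.add _ (by fun_prop)
      apply ContinuousOn.div (by fun_prop) (by fun_prop)
      intro y hy
      exact ne_of_gt (Real.sin_pos_of_pos_of_lt_pi hy.1 (by nlinarith [hy.2, Real.pi_pos]))
    · intro y hy
      rw [interior_Ioc] at hy
      obtain ⟨hy1, hy2⟩ := hy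
      have hsy : 0 < Real.sin y := Real.sin_pos_of_pos_of_lt_pi hy1
        (by nlinarith [Real.pi_pos])
      have h1 : HasDerivAt (fun x : ℝ => 2 * x * Real.cos x)
          (2 * Real.cos y + 2 * y * -Real.sin y) y := by
        have := ((hasDerivAt_id y).const_mul 2).mul (Real.hasDerivAt_cos y)
        refine this.congr_deriv ?_
        simp only [id_eq]; ring
      have h2 : HasDerivAt F
          (((2 * Real.cos y + 2 * y * -Real.sin y) * Real.sin y
              - 2 * y * Real.cos y * Real.cos y) / Real.sin y ^ 2 + 2) y := by
        have := (h1.div (Real.hasDerivAt_sin y) (ne_of_gt hsy)).add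
          ((hasDerivAt_id y).const_mul 2)
        refine this.congr_deriv ?_
        simp only [mul_one]
      rw [h2.deriv]
      have hkey : 2 * y + Real.cos (2 * y) < Real.sin (2 * y) + 1 :=
        aux_sin_cos (2 * y) (by linarith) (by linarith)
      rw [Real.sin_two_mul, Real.cos_two_mul] at hkey
      have hpyth := Real.sin_sq_add_cos_sq y
      have hnum : 0 < (2 * Real.cos y + 2 * y * -Real.sin y) * Real.sin y
          - 2 * y * Real.cos y * Real.cos y + 2 * Real.sin y ^ 2 := by
        have hp2 : y * (Real.sin y ^ 2 + Real.cos y ^ 2) = y * 1 := by rw [hpyth]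
        nlinarith [hp2]
      have : 0 < Real.sin y ^ 2 := by positivity
      rw [div_add' _ _ _ (ne_of_gt this)]
      positivity
  have hmem : x ∈ Set.Ioc (0:ℝ) (π/4) := ⟨hx0, hx1.le⟩
  have hmem' : π/4 ∈ Set.Ioc (0:ℝ) (π/4) := ⟨by positivity, le_refl _⟩
  have hlt := hmono hmem hmem' hx1
  have hF4 : F (π / 4) = π := by
    have h2 : Real.sqrt 2 ≠ 0 := by positivity
    simp only [hF, Real.cos_pi_div_four, Real.sin_pi_div_four]
    rw [mul_div_assoc, div_self (by positivity)]
    ring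
  rw [hF4] at hlt
  have hsx : 0 < Real.sin x := Real.sin_pos_of_pos_of_lt_pi hx0
    (by nlinarith [Real.pi_pos])
  have : 2 * x * Real.cos x / Real.sin x < π - 2 * x := by
    simp only [hF] at hlt; linarith
  calc 2 * x * Real.cos x = (2 * x * Real.cos x / Real.sin x) * Real.sin x := by
        field_simp
    _ < (π - 2 * x) * Real.sin x := by
        exact mul_lt_mul_of_pos_right this hsx

theorem jacobi_odd_term_positive (α β s : ℝ) (hβ : (-1 : ℝ) / 2 ≤ β) (hαβ : β ≤ α)
    (hlt : β < α) (hs : 2 * (α - β) ≤ s) (hs0 : 0 < s) :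
    ∀ t ∈ Set.Ioo (0 : ℝ) 1,
      0 < (1 - t) ^ (α - β) / (Real.arccos t) ^ s
          - (1 + t) ^ (α - β) / (Real.arccos (-t)) ^ s := by
  intro t ht
  obtain ⟨ht0, ht1⟩ := ht
  set γ := α - β with hγ
  have hγ0 : 0 < γ := by linarith
  set θ := Real.arccos t with hθ
  have hθ0 : 0 < θ := Real.arccos_pos.2 ht1
  have hθ2 : θ < π / 2 := Real.arccos_lt_pi_div_two.2 ht0
  have hπ : 0 < π := Real.pi_pos
  have harcneg : Real.arccos (-t) = π - θ := Real.arccos_neg t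
  have hcos : Real.cos θ = t := Real.cos_arccos (by linarith) ht1.le
  set x := θ / 2 with hx
  have hx0 : 0 < x := by positivity
  have hx4 : x < π / 4 := by simp only [hx]; linarith
  have hkey : 2 * x * Real.cos x < (π - 2 * x) * Real.sin x := aux_key x hx0 hx4
  have hsinx : 0 < Real.sin x := Real.sin_pos_of_pos_of_lt_pi hx0 (by nlinarith)
  have hcosx : 0 < Real.cos x := Real.cos_pos_of_mem_Ioo ⟨by linarith, by linarith⟩
  have h2xθ : 2 * x = θ := by rw [hx]; ring
  have hcos2 : Real.cos (2 * x) = t := by rw [h2xθ, hcos]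
  have hpyth := Real.sin_sq_add_cos_sq x
  have hct := Real.cos_two_mul x
  rw [hcos2] at hct
  have h1mt : 1 - t = 2 * Real.sin x ^ 2 := by nlinarith
  have h1pt : 1 + t = 2 * Real.cos x ^ 2 := by nlinarith
  have h1mt0 : 0 < 1 - t := by linarith
  have h1pt0 : 0 < 1 + t := by linarith
  have hπθ : 0 < π - θ := by linarith
  -- q = θ / (π - θ)
  set q := θ / (π - θ) with hq
  have hq0 : 0 < q := by positivity
  have hq1 : q < 1 := by
    rw [hq, div_lt_one hπθ]; linarith
  -- key: q^2 < (1-t)/(1+t)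
  have hsq : q ^ 2 < (1 - t) / (1 + t) := by
    rw [hq, div_pow, div_lt_div_iff₀ (by positivity) h1pt0]
    have h2x : 2 * x = θ := by rw [hx]; ring
    rw [h2x] at hkey
    rw [h1mt, h1pt]
    have hsq2 : (θ * Real.cos x) ^ 2 < ((π - θ) * Real.sin x) ^ 2 := by
      apply sq_lt_sq' _ hkey
      have : 0 < θ * Real.cos x := by positivity
      have : 0 < (π - θ) * Real.sin x := by positivity
      linarith
    nlinarith [hsq2]
  have hchain : q ^ s < ((1 - t) / (1 + t)) ^ γ := by
    calc q ^ s ≤ q ^ (2 * γ) := Real.rpow_le_rpow_of_exponent_ge hq0 hq1.le hs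
      _ = (q ^ (2:ℕ)) ^ γ := by
          rw [← Real.rpow_natCast q 2, ← Real.rpow_mul hq0.le]
          norm_num
      _ < ((1 - t) / (1 + t)) ^ γ :=
          Real.rpow_lt_rpow (by positivity) hsq hγ0
  -- main inequality: (1+t)^γ * θ^s < (1-t)^γ * (π-θ)^s
  have hmain : (1 + t) ^ γ * θ ^ s < (1 - t) ^ γ * (π - θ) ^ s := by
    have hθeq : θ = q * (π - θ) := by rw [hq]; field_simp
    have hθs : θ ^ s = q ^ s * (π - θ) ^ s := by
      rw [← Real.mul_rpow hq0.le hπθ.le, ← hθeq]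
    rw [hθs]
    have h2 : (1 + t) ^ γ * (q ^ s * (π - θ) ^ s)
        < (1 + t) ^ γ * (((1 - t) / (1 + t)) ^ γ * (π - θ) ^ s) := by
      apply mul_lt_mul_of_pos_left _ (by positivity)
      exact mul_lt_mul_of_pos_right hchain (by positivity)
    refine h2.trans_le (le_of_eq ?_)
    rw [← mul_assoc, ← Real.mul_rpow h1pt0.le (by positivity)]
    rw [mul_div_cancel₀ _ (ne_of_gt h1pt0)]
  rw [harcneg, sub_pos, div_lt_div_iff₀ (by positivity) (by positivity)]
  linarith [hmain]
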